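/- Fix a cardinal θ, an ordinal γ, and a structure M in a vocabulary of size ≤ θ. For θ-sequences ā, b̄ of elements of M, write ā ∼_γ b̄ if there is f ∈ ℐ^γ_θ(M,M) with f(a_i) = b_i for all i < θ. Then ∼_γ is an equivalence relation on M^θ, and the number of equivalence classes of ∼_β is at most ℶ_{β+1}(θ). -/

import Mathlib

open Cardinal Set FirstOrder FirstOrder.Language

universe u

namespace DGPaper

variable (L : FirstOrder.Language.{u, u})

/-- A partial isomorphism between two `L`-structures, given as the graph of a partial
map.  It is functional, injective, preserves all relations (of positive arity) in both
directions, and is compatible with the interpretations of all function symbols. -/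
def IsPartialIso (M N : Type u) [L.Structure M] [L.Structure N] (g : Set (M × N)) : Prop :=
  (∀ ⦃a : M⦄ ⦃b b' : N⦄, (a, b) ∈ g → (a, b') ∈ g → b = b') ∧
  (∀ ⦃a a' : M⦄ ⦃b : N⦄, (a, b) ∈ g → (a', b) ∈ g → a = a') ∧
  (∀ (n : ℕ) (R : L.Relations (n + 1)) (x : Fin (n + 1) → M) (y : Fin (n + 1) → N),
      (∀ i, (x i, y i) ∈ g) →
        (Structure.RelMap R x ↔ Structure.RelMap R y)) ∧
  (∀ (n : ℕ) (f : L.Functions n) (x : Fin n → M) (y : Fin n → N),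
      (∀ i, (x i, y i) ∈ g) →
        (∀ b : N, (Structure.funMap f x, b) ∈ g → b = Structure.funMap f y) ∧
        (∀ a : M, (a, Structure.funMap f y) ∈ g → a = Structure.funMap f x))

/-- The Karp back-and-forth hierarchy `ℐ^γ_θ(M, N)` of families of partial isomorphisms:
`ℐ⁰` consists of all partial isomorphisms of size `≤ θ`, and `f ∈ ℐ^γ` iff `f` is a
partial isomorphism of size `≤ θ` such that for all `γ' < γ`, every set of size `≤ θ` on
either side can be covered by some extension of `f` lying in `ℐ^{γ'}`. -/
noncomputable def BF (M N : Type u) [L.Structure M] [L.Structure N] (θ : Cardinal.{u}) :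
    Ordinal.{u} → Set (Set (M × N)) :=
  WellFounded.fix (C := fun _ : Ordinal.{u} => Set (Set (M × N))) Ordinal.lt_wf
    fun γ IH =>
      {g | IsPartialIso L M N g ∧ #g ≤ θ ∧
        ∀ γ' (h : γ' < γ),
          (∀ A : Set M, #A ≤ θ →
            ∃ g', g' ∈ IH γ' h ∧ g ⊆ g' ∧ A ⊆ Prod.fst '' g') ∧
          (∀ B : Set N, #B ≤ θ →
            ∃ g', g' ∈ IH γ' h ∧ g ⊆ g' ∧ B ⊆ Prod.snd '' g')}

/-- `M ≡^γ_θ N`: the structures `M` and `N` are `θ`-back-and-forth equivalent up to `γ`,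
i.e. `ℐ^γ_θ(M, N)` is nonempty. -/
noncomputable def BFEquiv (M N : Type u) [L.Structure M] [L.Structure N]
    (θ : Cardinal.{u}) (γ : Ordinal.{u}) : Prop :=
  (BF L M N θ γ).Nonempty

/-- The beth function starting at `θ`: `ℶ_0(θ) = θ`, `ℶ_{ξ+1}(θ) = 2^{ℶ_ξ(θ)}`, and
suprema at limits. -/
noncomputable def bethAt (θ : Cardinal.{u}) (o : Ordinal.{u}) : Cardinal.{u} :=
  Ordinal.limitRecOn o θ (fun _ ih => 2 ^ ih) (fun o _ ih => ⨆ i : Set.Iio o, ih i.1 i.2)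

end DGPaper

open DGPaper in
/-- The relation `ā ∼_γ b̄` between `θ`-sequences of elements of `M`:  some member of
`ℐ^γ_θ(M, M)` matches `a i` with `b i` for every `i < θ`. -/
noncomputable def simRel (L : FirstOrder.Language.{u, u}) (M : Type u) [L.Structure M]
    (θ : Cardinal.{u}) (γ : Ordinal.{u})
    (a b : θ.ord.ToType → M) : Prop :=
  ∃ g ∈ DGPaper.BF L M M θ γ, ∀ i, (a i, b i) ∈ g

section Aux

open DGPaper

variable {L : FirstOrder.Language.{u, u}} {M N P : Type u}
  [L.Structure M] [L.Structure N] [L.Structure P] {θ : Cardinal.{u}}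

theorem mem_BF_iff {γ : Ordinal.{u}} {g : Set (M × N)} :
    g ∈ BF L M N θ γ ↔ IsPartialIso L M N g ∧ #g ≤ θ ∧
      ∀ γ' (_ : γ' < γ),
        (∀ A : Set M, #A ≤ θ →
          ∃ g', g' ∈ BF L M N θ γ' ∧ g ⊆ g' ∧ A ⊆ Prod.fst '' g') ∧
        (∀ B : Set N, #B ≤ θ →
          ∃ g', g' ∈ BF L M N θ γ' ∧ g ⊆ g' ∧ B ⊆ Prod.snd '' g') := by
  unfold BF
  rw [WellFounded.fix_eq]
  rfl

theorem isPartialIso_mono {g h : Set (M × N)} (hg : IsPartialIso L M N g) (hsub : h ⊆ g) :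
    IsPartialIso L M N h := by
  obtain ⟨h1, h2, h3, h4⟩ := hg
  refine ⟨fun a b b' hab hab' => h1 (hsub hab) (hsub hab'),
    fun a a' b hab hab' => h2 (hsub hab) (hsub hab'),
    fun n R x y hxy => h3 n R x y fun i => hsub (hxy i),
    fun n f x y hxy => ?_⟩
  obtain ⟨c1, c2⟩ := h4 n f x y fun i => hsub (hxy i)
  exact ⟨fun b hb => c1 b (hsub hb), fun a ha => c2 a (hsub ha)⟩

theorem BF_mem_of_subset {γ : Ordinal.{u}} {g h : Set (M × N)}
    (hg : g ∈ BF L M N θ γ) (hsub : h ⊆ g) : h ∈ BF L M N θ γ := by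
  rw [mem_BF_iff] at hg ⊢
  obtain ⟨h1, h2, h3⟩ := hg
  refine ⟨isPartialIso_mono h1 hsub, le_trans (Cardinal.mk_le_mk_of_subset hsub) h2,
    fun γ' hγ' => ?_⟩
  obtain ⟨c1, c2⟩ := h3 γ' hγ'
  constructor
  · intro A hA
    obtain ⟨g', hg', hsub', hcov⟩ := c1 A hA
    exact ⟨g', hg', hsub.trans hsub', hcov⟩
  · intro B hB
    obtain ⟨g', hg', hsub', hcov⟩ := c2 B hB
    exact ⟨g', hg', hsub.trans hsub', hcov⟩

/-- The diagonal of a set, as a partial isomorphism. -/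
def diagRel (S : Set M) : Set (M × M) := (fun x => (x, x)) '' S

theorem mem_diagRel {S : Set M} {p : M × M} : p ∈ diagRel S ↔ p.1 ∈ S ∧ p.2 = p.1 := by
  constructor
  · rintro ⟨x, hx, rfl⟩; exact ⟨hx, rfl⟩
  · rintro ⟨h1, h2⟩
    exact ⟨p.1, h1, Prod.ext rfl h2.symm⟩

theorem isPartialIso_diagRel (S : Set M) : IsPartialIso L M M (diagRel S) := by
  have key : ∀ {k : ℕ} (x y : Fin k → M), (∀ i, (x i, y i) ∈ diagRel S) → y = x := by
    intro k x y h
    funext i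
    exact (mem_diagRel.mp (h i)).2
  refine ⟨fun a b b' h h' => (mem_diagRel.mp h).2.trans (mem_diagRel.mp h').2.symm,
    fun a a' b h h' => (mem_diagRel.mp h).2.symm.trans (mem_diagRel.mp h').2,
    fun n R x y hxy => by rw [key x y hxy],
    fun n f x y hxy => ?_⟩
  rw [key x y hxy]
  exact ⟨fun b hb => (mem_diagRel.mp hb).2, fun a ha => (mem_diagRel.mp ha).2.symm⟩

theorem diagRel_mem_BF (hθ : Cardinal.aleph0 ≤ θ) :
    ∀ (γ : Ordinal.{u}) (S : Set M), #S ≤ θ → diagRel S ∈ BF L M M θ γ := by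
  intro γ
  induction γ using Ordinal.induction with
  | h γ IH =>
  intro S hS
  rw [mem_BF_iff]
  refine ⟨isPartialIso_diagRel S, Cardinal.mk_image_le.trans hS, fun γ' hγ' => ?_⟩
  have H : ∀ A : Set M, #A ≤ θ → ∃ g', g' ∈ BF L M M θ γ' ∧ diagRel S ⊆ g' ∧
      A ⊆ Prod.fst '' g' ∧ A ⊆ Prod.snd '' g' := by
    intro A hA
    refine ⟨diagRel (S ∪ A), IH γ' hγ' _ ?_, Set.image_mono Set.subset_union_left, ?_, ?_⟩
    · exact (Cardinal.mk_union_le _ _).trans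
        ((add_le_add hS hA).trans (Cardinal.add_eq_self hθ).le)
    · intro a ha
      exact ⟨(a, a), mem_diagRel.mpr ⟨Or.inr ha, rfl⟩, rfl⟩
    · intro a ha
      exact ⟨(a, a), mem_diagRel.mpr ⟨Or.inr ha, rfl⟩, rfl⟩
  exact ⟨fun A hA => ((H A hA).imp fun g' h => ⟨h.1, h.2.1, h.2.2.1⟩),
    fun B hB => ((H B hB).imp fun g' h => ⟨h.1, h.2.1, h.2.2.2⟩)⟩

/-- The converse of a partial isomorphism. -/
def swRel (g : Set (M × N)) : Set (N × M) := Prod.swap ⁻¹' g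

theorem mem_swRel {g : Set (M × N)} {p : N × M} : p ∈ swRel g ↔ (p.2, p.1) ∈ g := Iff.rfl

theorem swRel_mem_BF :
    ∀ (γ : Ordinal.{u}) (g : Set (M × N)), g ∈ BF L M N θ γ → swRel g ∈ BF L N M θ γ := by
  intro γ
  induction γ using Ordinal.induction with
  | h γ IH =>
  intro g hg
  rw [mem_BF_iff] at hg ⊢
  obtain ⟨⟨p1, p2, p3, p4⟩, hcard, hext⟩ := hg
  refine ⟨⟨fun a b b' h h' => p2 h h', fun a a' b h h' => p1 h h',
      fun n R x y hxy => (p3 n R y x fun i => hxy i).symm,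
      fun n f x y hxy => ?_⟩, ?_, ?_⟩
  · obtain ⟨c1, c2⟩ := p4 n f y x fun i => hxy i
    exact ⟨fun b hb => c2 b hb, fun a ha => c1 a ha⟩
  · exact (Cardinal.mk_preimage_of_injective _ _ Prod.swap_injective).trans hcard
  · intro γ' hγ'
    obtain ⟨c1, c2⟩ := hext γ' hγ'
    refine ⟨fun A hA => ?_, fun B hB => ?_⟩
    · obtain ⟨g', hg', hsub, hcov⟩ := c2 A hA
      refine ⟨swRel g', IH γ' hγ' g' hg', fun p hp => hsub hp, ?_⟩
      intro a ha
      obtain ⟨⟨u, v⟩, hp, rfl⟩ := hcov ha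
      exact ⟨(v, u), hp, rfl⟩
    · obtain ⟨g', hg', hsub, hcov⟩ := c1 B hB
      refine ⟨swRel g', IH γ' hγ' g' hg', fun p hp => hsub hp, ?_⟩
      intro b hb
      obtain ⟨⟨u, v⟩, hp, rfl⟩ := hcov hb
      exact ⟨(v, u), hp, rfl⟩

/-- The composition of two partial isomorphisms. -/
def cmpRel (f : Set (M × N)) (g : Set (N × P)) : Set (M × P) :=
  {p | ∃ m : N, (p.1, m) ∈ f ∧ (m, p.2) ∈ g}

theorem cmpRel_mem_BF :
    ∀ (γ : Ordinal.{u}) (f : Set (M × N)) (g : Set (N × P)),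
      f ∈ BF L M N θ γ → g ∈ BF L N P θ γ → cmpRel f g ∈ BF L M P θ γ := by
  intro γ
  induction γ using Ordinal.induction with
  | h γ IH =>
  intro f g hf hg
  rw [mem_BF_iff] at hf hg ⊢
  obtain ⟨⟨f1, f2, f3, f4⟩, hfcard, hfext⟩ := hf
  obtain ⟨⟨g1, g2, g3, g4⟩, hgcard, hgext⟩ := hg
  have memc : ∀ {p : M × P}, p ∈ cmpRel f g ↔ ∃ m : N, (p.1, m) ∈ f ∧ (m, p.2) ∈ g := Iff.rfl
  refine ⟨⟨?_, ?_, ?_, ?_⟩, ?_, ?_⟩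
  · rintro a b b' ⟨m, hm1, hm2⟩ ⟨m', hm1', hm2'⟩
    obtain rfl : m = m' := f1 hm1 hm1'
    exact g1 hm2 hm2'
  · rintro a a' b ⟨m, hm1, hm2⟩ ⟨m', hm1', hm2'⟩
    obtain rfl : m = m' := g2 hm2 hm2'
    exact f2 hm1 hm1'
  · intro n R x z hxz
    set y : Fin (n + 1) → N := fun i => Classical.choose (hxz i) with hy
    have hspec : ∀ i, (x i, y i) ∈ f ∧ (y i, z i) ∈ g := fun i => Classical.choose_spec (hxz i)
    exact (f3 n R x y fun i => (hspec i).1).trans (g3 n R y z fun i => (hspec i).2)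
  · intro n F x z hxz
    set y : Fin n → N := fun i => Classical.choose (hxz i) with hy
    have hspec : ∀ i, (x i, y i) ∈ f ∧ (y i, z i) ∈ g := fun i => Classical.choose_spec (hxz i)
    obtain ⟨df1, df2⟩ := f4 n F x y fun i => (hspec i).1
    obtain ⟨dg1, dg2⟩ := g4 n F y z fun i => (hspec i).2
    constructor
    · rintro c ⟨m, hm1, hm2⟩
      obtain rfl : m = Structure.funMap F y := df1 m hm1
      exact dg1 c hm2
    · rintro a ⟨m, hm1, hm2⟩
      obtain rfl : m = Structure.funMap F y := dg2 m hm2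
      exact df2 a hm1
  · -- cardinality
    have : #(cmpRel f g) ≤ #f := by
      refine Cardinal.mk_le_of_injective
        (f := fun p => (⟨(p.1.1, Classical.choose p.2), (Classical.choose_spec p.2).1⟩ : f)) ?_
      rintro ⟨p, hp⟩ ⟨q, hq⟩ hpq
      have h0 : (p.1, Classical.choose hp) = (q.1, Classical.choose hq) :=
        Subtype.ext_iff.mp hpq
      rw [Prod.mk.injEq] at h0
      obtain ⟨h1a, h1b⟩ := h0
      have h2 : p.2 = q.2 := by
        refine g1 (Classical.choose_spec hp).2 ?_
        rw [h1b]
        exact (Classical.choose_spec hq).2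
      exact Subtype.ext (Prod.ext h1a h2)
    exact this.trans hfcard
  · intro γ' hγ'
    constructor
    · intro A hA
      obtain ⟨f', hf', hfsub, hfcov⟩ := (hfext γ' hγ').1 A hA
      obtain ⟨g', hg', hgsub, hgcov⟩ := (hgext γ' hγ').1 (Prod.snd '' f')
        (Cardinal.mk_image_le.trans (mem_BF_iff.mp hf').2.1)
      refine ⟨cmpRel f' g', IH γ' hγ' f' g' hf' hg', ?_, ?_⟩
      · rintro p ⟨m, hm1, hm2⟩
        exact ⟨m, hfsub hm1, hgsub hm2⟩
      · intro a ha
        obtain ⟨⟨u, m⟩, hum, rfl⟩ := hfcov ha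
        obtain ⟨⟨m', c⟩, hmc, hm'⟩ := hgcov ⟨(u, m), hum, rfl⟩
        dsimp at hm'
        subst hm'
        exact ⟨(u, c), ⟨m', hum, hmc⟩, rfl⟩
    · intro B hB
      obtain ⟨g', hg', hgsub, hgcov⟩ := (hgext γ' hγ').2 B hB
      obtain ⟨f', hf', hfsub, hfcov⟩ := (hfext γ' hγ').2 (Prod.fst '' g')
        (Cardinal.mk_image_le.trans (mem_BF_iff.mp hg').2.1)
      refine ⟨cmpRel f' g', IH γ' hγ' f' g' hf' hg', ?_, ?_⟩
      · rintro p ⟨m, hm1, hm2⟩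
        exact ⟨m, hfsub hm1, hgsub hm2⟩
      · intro b hb
        obtain ⟨⟨m, c⟩, hmc, rfl⟩ := hgcov hb
        obtain ⟨⟨u, m'⟩, hum, hm'⟩ := hfcov ⟨(m, c), hmc, rfl⟩
        dsimp at hm'
        subst hm'
        exact ⟨(u, c), ⟨m', hum, hmc⟩, rfl⟩

theorem simRel_equiv (hθ : Cardinal.aleph0 ≤ θ) (γ : Ordinal.{u}) :
    Equivalence (simRel L M θ γ) := by
  constructor
  · intro a
    refine ⟨diagRel (Set.range a), diagRel_mem_BF hθ γ _ ?_, fun i => ⟨a i, Set.mem_range_self i, rfl⟩⟩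
    exact Cardinal.mk_range_le.trans (by rw [Cardinal.mk_toType, Cardinal.card_ord])
  · rintro a b ⟨g, hg, hab⟩
    exact ⟨swRel g, swRel_mem_BF γ g hg, fun i => hab i⟩
  · rintro a b c ⟨g1, hg1, h1⟩ ⟨g2, hg2, h2⟩
    exact ⟨cmpRel g1 g2, cmpRel_mem_BF γ g1 g2 hg1 hg2, fun i => ⟨b i, h1 i, h2 i⟩⟩

end Aux

section Count

open DGPaper

variable {L : FirstOrder.Language.{u, u}} {M : Type u} [L.Structure M] {θ : Cardinal.{u}}

instance (o : Ordinal.{u}) : IsWellOrder o.ToType (· < ·) := isWellOrder_lt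

theorem bethAt_zero : bethAt θ 0 = θ := Ordinal.limitRecOn_zero _ _ _

theorem bethAt_succ (o : Ordinal.{u}) : bethAt θ (o + 1) = 2 ^ bethAt θ o := by
  unfold bethAt
  rw [Ordinal.add_one_eq_succ, Ordinal.limitRecOn_succ]

theorem bethAt_limit {o : Ordinal.{u}} (h : Order.IsSuccLimit o) :
    bethAt θ o = ⨆ i : Set.Iio o, bethAt θ i.1 := by
  unfold bethAt
  rw [Ordinal.limitRecOn_limit _ _ _ _ h]

theorem bethAt_mono (θ : Cardinal.{u}) :
    ∀ o₂ o₁ : Ordinal.{u}, o₁ ≤ o₂ → bethAt θ o₁ ≤ bethAt θ o₂ := by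
  intro o₂
  induction o₂ using Ordinal.induction with
  | h o₂ IH =>
  intro o₁ h
  rcases eq_or_lt_of_le h with rfl | hlt
  · exact le_rfl
  rcases Ordinal.zero_or_succ_or_isSuccLimit o₂ with rfl | ⟨δ, rfl⟩ | hl
  · exact absurd hlt (not_lt_zero (a := o₁))
  · have h2 : bethAt θ o₁ ≤ bethAt θ δ := IH δ (Order.lt_succ δ) o₁ (Order.lt_succ_iff.mp hlt)
    calc bethAt θ o₁ ≤ bethAt θ δ := h2
      _ ≤ 2 ^ bethAt θ δ := (Cardinal.cantor _).le
      _ = bethAt θ (Order.succ δ) := by rw [← Ordinal.add_one_eq_succ, bethAt_succ]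
  · rw [bethAt_limit hl]
    exact le_ciSup (Cardinal.bddAbove_range _) (⟨o₁, hlt⟩ : Set.Iio o₂)

theorem le_bethAt (θ : Cardinal.{u}) (o : Ordinal.{u}) : θ ≤ bethAt θ o := by
  have := bethAt_mono θ o 0 (zero_le (a := o))
  rwa [bethAt_zero] at this

theorem bethAt_lt_bethAt (θ : Cardinal.{u}) {o₁ o₂ : Ordinal.{u}} (h : o₁ < o₂) :
    bethAt θ o₁ < bethAt θ o₂ := by
  refine (Cardinal.cantor (bethAt θ o₁)).trans_le ?_
  rw [← bethAt_succ]
  exact bethAt_mono θ o₂ _ (by rwa [Ordinal.add_one_eq_succ, Order.succ_le_iff])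

theorem card_le_bethAt (θ : Cardinal.{u}) (o : Ordinal.{u}) : o.card ≤ bethAt θ o := by
  have hsm : StrictMono fun o : Ordinal.{u} => (bethAt θ o).ord :=
    fun o₁ o₂ h => Cardinal.ord_lt_ord.mpr (bethAt_lt_bethAt θ h)
  calc o.card ≤ (bethAt θ o).ord.card := Ordinal.card_le_card hsm.le_apply
    _ = bethAt θ o := Cardinal.card_ord _

/-- Index type for the atomic relational information. -/
def relIndex (L : FirstOrder.Language.{u, u}) (θ : Cardinal.{u}) : Type u :=
  (Σ n, L.Relations n) × List θ.ord.ToType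

/-- Index type for the atomic functional information. -/
def funIndex (L : FirstOrder.Language.{u, u}) (θ : Cardinal.{u}) : Type u :=
  (Σ n, L.Functions n) × List θ.ord.ToType × θ.ord.ToType

/-- The equality-type of a sequence. -/
def eqInv (M : Type u) {θ : Cardinal.{u}} (a : θ.ord.ToType → M) :
    Set (θ.ord.ToType × θ.ord.ToType) := {p | a p.1 = a p.2}

/-- The relational atomic type of a sequence. -/
def relInv (L : FirstOrder.Language.{u, u}) {M : Type u} [L.Structure M] {θ : Cardinal.{u}}
    (a : θ.ord.ToType → M) : Set (relIndex L θ) :=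
  {p | ∃ σ : Fin p.1.1 → θ.ord.ToType, p.2 = List.ofFn σ ∧ Structure.RelMap p.1.2 (a ∘ σ)}

/-- The functional atomic type of a sequence. -/
def funInv (L : FirstOrder.Language.{u, u}) {M : Type u} [L.Structure M] {θ : Cardinal.{u}}
    (a : θ.ord.ToType → M) : Set (funIndex L θ) :=
  {p | ∃ σ : Fin p.1.1 → θ.ord.ToType,
    p.2.1 = List.ofFn σ ∧ Structure.funMap p.1.2 (a ∘ σ) = a p.2.2}

/-- Joining two `θ`-sequences into one, along an equivalence `e`. -/
def joinSeq {M : Type u} {θ : Cardinal.{u}}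
    (e : (θ.ord.ToType ⊕ θ.ord.ToType) ≃ θ.ord.ToType) (a c : θ.ord.ToType → M) :
    θ.ord.ToType → M := fun i => Sum.elim a c (e.symm i)

/-- The set of `∼_γ'`-classes of extensions of a sequence. -/
def pairInv (L : FirstOrder.Language.{u, u}) {M : Type u} [L.Structure M] {θ : Cardinal.{u}}
    (e : (θ.ord.ToType ⊕ θ.ord.ToType) ≃ θ.ord.ToType) (γ' : Ordinal.{u})
    (a : θ.ord.ToType → M) : Set (Quot (simRel L M θ γ')) :=
  Set.range fun c => Quot.mk _ (joinSeq e a c)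

theorem exists_enum {θ : Cardinal.{u}} (a : θ.ord.ToType → M) {A : Set M} (hA : #A ≤ θ) :
    ∃ c : θ.ord.ToType → M, A ⊆ Set.range c := by
  rcases A.eq_empty_or_nonempty with rfl | hne
  · exact ⟨a, by simp⟩
  · have hle : #A ≤ #(θ.ord.ToType) := by rwa [Cardinal.mk_toType, Cardinal.card_ord]
    obtain ⟨f⟩ := (Cardinal.le_def _ _).mp hle
    haveI : Nonempty A := hne.to_subtype
    refine ⟨fun i => (Function.invFun (⇑f) i : A), fun x hx => ?_⟩
    refine ⟨f ⟨x, hx⟩, ?_⟩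
    show ((Function.invFun (⇑f) (f ⟨x, hx⟩) : A) : M) = x
    rw [Function.leftInverse_invFun f.injective ⟨x, hx⟩]

theorem simRel_of_inv_eq (hθ : Cardinal.aleph0 ≤ θ)
    (e : (θ.ord.ToType ⊕ θ.ord.ToType) ≃ θ.ord.ToType) (β : Ordinal.{u})
    {a b : θ.ord.ToType → M}
    (h1 : eqInv M a = eqInv M b) (h2 : relInv L a = relInv L b) (h3 : funInv L a = funInv L b)
    (h4 : ∀ γ' < β, pairInv L e γ' a = pairInv L e γ' b) :
    simRel L M θ β a b := by
  have hEq : ∀ i j : θ.ord.ToType, a i = a j → b i = b j := by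
    intro i j h
    exact (Set.ext_iff.mp h1 (i, j)).mp h
  refine ⟨Set.range fun i => (a i, b i), ?_, fun i => Set.mem_range_self i⟩
  rw [mem_BF_iff]
  have hiso : IsPartialIso L M M (Set.range fun i => (a i, b i)) := by
    refine ⟨?_, ?_, ?_, ?_⟩
    · rintro u v v' ⟨i, hi⟩ ⟨j, hj⟩
      rw [Prod.mk.injEq] at hi hj
      rw [← hi.2, ← hj.2]
      exact hEq i j (hi.1.trans hj.1.symm)
    · rintro u u' v ⟨i, hi⟩ ⟨j, hj⟩
      rw [Prod.mk.injEq] at hi hj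
      rw [← hi.1, ← hj.1]
      have : b i = b j → a i = a j := fun h => (Set.ext_iff.mp h1 (i, j)).mpr h
      exact this (hi.2.trans hj.2.symm)
    · intro n R x y hk
      choose σ hspec using hk
      have hxa : x = a ∘ σ := funext fun k => (congrArg Prod.fst (hspec k)).symm
      have hyb : y = b ∘ σ := funext fun k => (congrArg Prod.snd (hspec k)).symm
      rw [hxa, hyb]
      constructor
      · intro hr
        have hmem : (⟨⟨n + 1, R⟩, List.ofFn σ⟩ : relIndex L θ) ∈ relInv L a := ⟨σ, rfl, hr⟩
        rw [h2] at hmem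
        obtain ⟨σ', hσ', hR⟩ := hmem
        obtain rfl : σ = σ' := List.ofFn_injective hσ'
        exact hR
      · intro hr
        have hmem : (⟨⟨n + 1, R⟩, List.ofFn σ⟩ : relIndex L θ) ∈ relInv L b := ⟨σ, rfl, hr⟩
        rw [← h2] at hmem
        obtain ⟨σ', hσ', hR⟩ := hmem
        obtain rfl : σ = σ' := List.ofFn_injective hσ'
        exact hR
    · intro n F x y hk
      choose σ hspec using hk
      have hxa : x = a ∘ σ := funext fun k => (congrArg Prod.fst (hspec k)).symm
      have hyb : y = b ∘ σ := funext fun k => (congrArg Prod.snd (hspec k)).symm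
      rw [hxa, hyb]
      constructor
      · rintro c ⟨j, hj⟩
        rw [Prod.mk.injEq] at hj
        have hmem : (⟨⟨n, F⟩, List.ofFn σ, j⟩ : funIndex L θ) ∈ funInv L a :=
          ⟨σ, rfl, hj.1.symm⟩
        rw [h3] at hmem
        obtain ⟨σ', hσ', hF⟩ := hmem
        obtain rfl : σ = σ' := List.ofFn_injective hσ'
        exact hj.2.symm.trans hF.symm
      · rintro u ⟨j, hj⟩
        rw [Prod.mk.injEq] at hj
        have hmem : (⟨⟨n, F⟩, List.ofFn σ, j⟩ : funIndex L θ) ∈ funInv L b :=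
          ⟨σ, rfl, hj.2.symm⟩
        rw [← h3] at hmem
        obtain ⟨σ', hσ', hF⟩ := hmem
        obtain rfl : σ = σ' := List.ofFn_injective hσ'
        exact hj.1.symm.trans hF.symm
  refine ⟨hiso, Cardinal.mk_range_le.trans
    (by rw [Cardinal.mk_toType, Cardinal.card_ord]), fun γ' hγ' => ⟨?_, ?_⟩⟩
  · intro A hA
    obtain ⟨c, hc⟩ := exists_enum a hA
    have hmem : Quot.mk (simRel L M θ γ') (joinSeq e a c) ∈ pairInv L e γ' b := by
      rw [← h4 γ' hγ']
      exact ⟨c, rfl⟩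
    obtain ⟨d, hd⟩ := hmem
    have hsim : simRel L M θ γ' (joinSeq e a c) (joinSeq e b d) :=
      (simRel_equiv hθ γ').symm ((simRel_equiv hθ γ').eqvGen_iff.mp (Quot.eq.mp hd))
    obtain ⟨g0, hg0, hmatch⟩ := hsim
    refine ⟨Set.range fun i => (joinSeq e a c i, joinSeq e b d i),
      BF_mem_of_subset hg0 (by rintro p ⟨i, rfl⟩; exact hmatch i), ?_, ?_⟩
    · rintro p ⟨i, rfl⟩
      exact ⟨e (Sum.inl i), by simp [joinSeq]⟩
    · intro x hx
      obtain ⟨i, rfl⟩ := hc hx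
      exact ⟨(joinSeq e a c (e (Sum.inr i)), joinSeq e b d (e (Sum.inr i))),
        Set.mem_range_self _, by simp [joinSeq]⟩
  · intro B hB
    obtain ⟨c, hc⟩ := exists_enum a hB
    have hmem : Quot.mk (simRel L M θ γ') (joinSeq e b c) ∈ pairInv L e γ' a := by
      rw [h4 γ' hγ']
      exact ⟨c, rfl⟩
    obtain ⟨d, hd⟩ := hmem
    have hsim : simRel L M θ γ' (joinSeq e a d) (joinSeq e b c) :=
      (simRel_equiv hθ γ').eqvGen_iff.mp (Quot.eq.mp hd)
    obtain ⟨g0, hg0, hmatch⟩ := hsim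
    refine ⟨Set.range fun i => (joinSeq e a d i, joinSeq e b c i),
      BF_mem_of_subset hg0 (by rintro p ⟨i, rfl⟩; exact hmatch i), ?_, ?_⟩
    · rintro p ⟨i, rfl⟩
      exact ⟨e (Sum.inl i), by simp [joinSeq]⟩
    · intro x hx
      obtain ⟨i, rfl⟩ := hc hx
      exact ⟨(joinSeq e a d (e (Sum.inr i)), joinSeq e b c (e (Sum.inr i))),
        Set.mem_range_self _, by simp [joinSeq]⟩

theorem count_le (hθ : Cardinal.aleph0 ≤ θ) (hL : L.card ≤ θ) :
    ∀ β : Ordinal.{u}, #(Quot (simRel L M θ β)) ≤ bethAt θ (β + 1) := by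
  have hι : #(θ.ord.ToType) = θ := by rw [Cardinal.mk_toType, Cardinal.card_ord]
  have hee : Nonempty ((θ.ord.ToType ⊕ θ.ord.ToType) ≃ θ.ord.ToType) := by
    rw [← Cardinal.eq, Cardinal.mk_sum, hι, Cardinal.lift_id, Cardinal.add_eq_self hθ]
  obtain ⟨e⟩ := hee
  haveI : Infinite θ.ord.ToType := Cardinal.infinite_iff.mpr (by rw [hι]; exact hθ)
  have hrel : #(relIndex L θ) ≤ θ := by
    have h1 : #(Σ n, L.Relations n) ≤ θ :=
      (Cardinal.mk_le_of_injective (f := (Sum.inr : _ → L.Symbols)) Sum.inr_injective).trans hL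
    calc #(relIndex L θ) = #(Σ n, L.Relations n) * #(List θ.ord.ToType) := by
          simp only [relIndex, Cardinal.mk_prod, Cardinal.lift_id]
      _ ≤ θ * θ := by
          refine mul_le_mul' h1 ?_
          rw [Cardinal.mk_list_eq_mk, hι]
      _ = θ := Cardinal.mul_eq_self hθ
  have hfun : #(funIndex L θ) ≤ θ := by
    have h1 : #(Σ n, L.Functions n) ≤ θ :=
      (Cardinal.mk_le_of_injective (f := (Sum.inl : _ → L.Symbols)) Sum.inl_injective).trans hL
    calc #(funIndex L θ) = #(Σ n, L.Functions n) * (#(List θ.ord.ToType) * #(θ.ord.ToType)) := by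
          simp only [funIndex, Cardinal.mk_prod, Cardinal.lift_id]
      _ ≤ θ * (θ * θ) := by
          refine mul_le_mul' h1 (mul_le_mul' ?_ hι.le)
          rw [Cardinal.mk_list_eq_mk, hι]
      _ = θ := by rw [Cardinal.mul_eq_self hθ, Cardinal.mul_eq_self hθ]
  have hprodidx : #(θ.ord.ToType × θ.ord.ToType) ≤ θ := by
    simp only [Cardinal.mk_prod, Cardinal.lift_id, hι]
    exact (Cardinal.mul_eq_self hθ).le
  intro β
  induction β using Ordinal.induction with
  | h β IH =>
  have hbinf : Cardinal.aleph0 ≤ bethAt θ β := hθ.trans (le_bethAt θ β)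
  have hκinf : Cardinal.aleph0 ≤ (2 : Cardinal) ^ bethAt θ β :=
    hbinf.trans (Cardinal.cantor _).le
  have hpow : ∀ c : Cardinal.{u}, c ≤ θ → (2 : Cardinal) ^ c ≤ 2 ^ bethAt θ β := fun c hc =>
    Cardinal.power_le_power_left two_ne_zero (hc.trans (le_bethAt θ β))
  rw [bethAt_succ]
  refine le_trans (Cardinal.mk_le_of_injective (f := fun q : Quot (simRel L M θ β) =>
    ((eqInv M q.out, relInv L q.out, funInv L q.out,
      fun i : β.ToType => pairInv L e ((Ordinal.ToType.mk (o := β)).symm i).1 q.out) :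
      Set (θ.ord.ToType × θ.ord.ToType) × Set (relIndex L θ) × Set (funIndex L θ) ×
        ((i : β.ToType) → Set (Quot (simRel L M θ ((Ordinal.ToType.mk (o := β)).symm i).1))))) ?_) ?_
  · intro q q' h
    rw [Prod.mk.injEq, Prod.mk.injEq, Prod.mk.injEq] at h
    obtain ⟨h1, h2, h3, h4⟩ := h
    have h4' : ∀ γ' < β, pairInv L e γ' q.out = pairInv L e γ' q'.out := by
      intro γ' hγ'
      have := congrFun h4 (Ordinal.ToType.mk (o := β) ⟨γ', hγ'⟩)
      rwa [OrderIso.symm_apply_apply] at this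
    have hsim := simRel_of_inv_eq hθ e β h1 h2 h3 h4'
    calc q = Quot.mk _ q.out := (Quot.out_eq q).symm
      _ = Quot.mk _ q'.out := Quot.sound hsim
      _ = q' := Quot.out_eq q'
  · rw [Cardinal.mk_prod, Cardinal.mk_prod, Cardinal.mk_prod]
    simp only [Cardinal.lift_id, Cardinal.mk_set, Cardinal.mk_pi]
    have hpi : (Cardinal.prod fun i : β.ToType =>
        (2 : Cardinal) ^ #(Quot (simRel L M θ ((Ordinal.ToType.mk (o := β)).symm i).1))) ≤
        2 ^ bethAt θ β := by
      have step : ∀ i : β.ToType,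
          (2 : Cardinal) ^ #(Quot (simRel L M θ ((Ordinal.ToType.mk (o := β)).symm i).1)) ≤
            2 ^ bethAt θ β := by
        intro i
        have hlt : ((Ordinal.ToType.mk (o := β)).symm i).1 < β :=
          ((Ordinal.ToType.mk (o := β)).symm i).2
        have hQ : #(Quot (simRel L M θ ((Ordinal.ToType.mk (o := β)).symm i).1)) ≤ bethAt θ β := by
          refine (IH _ hlt).trans ?_
          refine bethAt_mono θ β _ ?_
          rwa [Ordinal.add_one_eq_succ, Order.succ_le_iff]
        exact Cardinal.power_le_power_left two_ne_zero hQ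
      calc (Cardinal.prod fun i : β.ToType =>
          (2 : Cardinal) ^ #(Quot (simRel L M θ ((Ordinal.ToType.mk (o := β)).symm i).1))) ≤
          Cardinal.prod fun _ : β.ToType => (2 : Cardinal) ^ bethAt θ β :=
            Cardinal.prod_le_prod _ _ step
        _ = ((2 : Cardinal) ^ bethAt θ β) ^ #(β.ToType) := Cardinal.prod_const' _ _
        _ = (2 : Cardinal) ^ (bethAt θ β * β.card) := by
            rw [← Cardinal.power_mul, Cardinal.mk_toType]
        _ ≤ (2 : Cardinal) ^ (bethAt θ β * bethAt θ β) :=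
            Cardinal.power_le_power_left two_ne_zero
              (mul_le_mul' le_rfl (card_le_bethAt θ β))
        _ = (2 : Cardinal) ^ bethAt θ β := by rw [Cardinal.mul_eq_self hbinf]
    calc (2 : Cardinal) ^ #(θ.ord.ToType × θ.ord.ToType) *
        ((2 : Cardinal) ^ #(relIndex L θ) * ((2 : Cardinal) ^ #(funIndex L θ) *
          Cardinal.prod fun i : β.ToType =>
            (2 : Cardinal) ^ #(Quot (simRel L M θ ((Ordinal.ToType.mk (o := β)).symm i).1)))) ≤
        (2 ^ bethAt θ β) * ((2 ^ bethAt θ β) * ((2 ^ bethAt θ β) * (2 ^ bethAt θ β))) := by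
          exact mul_le_mul' (hpow _ hprodidx) (mul_le_mul' (hpow _ hrel)
            (mul_le_mul' (hpow _ hfun) hpi))
      _ = 2 ^ bethAt θ β := by
          rw [Cardinal.mul_eq_self hκinf, Cardinal.mul_eq_self hκinf,
            Cardinal.mul_eq_self hκinf]

end Count

open DGPaper in
/-- For a structure `M` in a vocabulary of size `≤ θ`, the relation
`∼_γ` is an equivalence relation on `θ`-sequences of elements of `M`, and the number of
`∼_β`-equivalence classes is at most `ℶ_{β+1}(θ)`. -/
theorem simRel_equivalence_and_count (L : FirstOrder.Language.{u, u})
    (M : Type u) [L.Structure M]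
    (θ : Cardinal.{u}) (hθ : Cardinal.aleph0 ≤ θ) (hL : L.card ≤ θ)
    (γ β : Ordinal.{u}) :
    Equivalence (simRel L M θ γ) ∧
      #(Quot (simRel L M θ β)) ≤ bethAt θ (β + 1) := by
  exact ⟨simRel_equiv hθ γ, count_le hθ hL β⟩
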